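/- (No faster-than-light inertial observers.) Suppose f : ℝ⁴ → ℝ⁴ is a bijection such that for all x, y: dist(x,y) = time(x,y) if and only if dist(f x, f y) = time(f x, f y) (f preserves light-like separation in both directions). If ℓ is a line through the origin contained in the image under f⁻¹ of the time axis, i.e., f maps ℓ onto the time axis, then every nonzero direction vector u of ℓ satisfies u₁² + u₂² + u₃² < u₄² OR ℓ is the time axis; in particular, u₁² + u₂² + u₃² ≤ u₄² with equality impossible, so the speed |spatial part of u| / |u₄| is strictly less than 1. -/

import Mathlib

noncomputable def mtime (x y : Fin 4 → ℝ) : ℝ := |x 3 - y 3|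

noncomputable def mdist (x y : Fin 4 → ℝ) : ℝ :=
  Real.sqrt ((x 0 - y 0) ^ 2 + (x 1 - y 1) ^ 2 + (x 2 - y 2) ^ 2)

def IsAffineMap4 (P : (Fin 4 → ℝ) → (Fin 4 → ℝ)) : Prop :=
  ∃ (L : (Fin 4 → ℝ) →ₗ[ℝ] (Fin 4 → ℝ)) (b : Fin 4 → ℝ), ∀ x, P x = L x + b

def PreservesMinkowski (P : (Fin 4 → ℝ) → (Fin 4 → ℝ)) : Prop :=
  ∀ x y, mtime x y ^ 2 - mdist x y ^ 2 = mtime (P x) (P y) ^ 2 - mdist (P x) (P y) ^ 2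

def IsPoincare (P : (Fin 4 → ℝ) → (Fin 4 → ℝ)) : Prop :=
  IsAffineMap4 P ∧ Function.Bijective P ∧ PreservesMinkowski P

noncomputable def Qmink (x : Fin 4 → ℝ) : ℝ := x 3 ^ 2 - x 0 ^ 2 - x 1 ^ 2 - x 2 ^ 2

noncomputable def Bmink (x y : Fin 4 → ℝ) : ℝ := x 3 * y 3 - x 0 * y 0 - x 1 * y 1 - x 2 * y 2

def e4 : Fin 4 → ℝ := fun i => if i = 3 then 1 else 0

def timeAxis : Set (Fin 4 → ℝ) := {x | x 0 = 0 ∧ x 1 = 0 ∧ x 2 = 0}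

/-- If two points are lightlike separated, their "squared interval" vanishes. -/
lemma sq_of_light {x y : Fin 4 → ℝ} (h : mdist x y = mtime x y) :
    (x 0 - y 0) ^ 2 + (x 1 - y 1) ^ 2 + (x 2 - y 2) ^ 2 = (x 3 - y 3) ^ 2 := by
  have hnn : (0:ℝ) ≤ (x 0 - y 0) ^ 2 + (x 1 - y 1) ^ 2 + (x 2 - y 2) ^ 2 := by positivity
  have := congrArg (fun r : ℝ => r ^ 2) h
  simpa [mdist, mtime, Real.sq_sqrt hnn, sq_abs] using this

/-- Conversely, if the squared interval vanishes, the points are lightlike separated. -/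
lemma light_of_sq {x y : Fin 4 → ℝ}
    (h : (x 0 - y 0) ^ 2 + (x 1 - y 1) ^ 2 + (x 2 - y 2) ^ 2 = (x 3 - y 3) ^ 2) :
    mdist x y = mtime x y := by
  rw [mdist, h, Real.sqrt_sq_eq_abs, mtime]

/-- Every point of spacetime is lightlike separated from some point of the time axis. -/
lemma exists_light_timeAxis (q : Fin 4 → ℝ) :
    ∃ w ∈ timeAxis, mdist q w = mtime q w := by
  set s : ℝ := Real.sqrt (q 0 ^ 2 + q 1 ^ 2 + q 2 ^ 2) with hs
  refine ⟨fun i => if i = 3 then q 3 - s else 0,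
    ⟨if_neg (by decide), if_neg (by decide), if_neg (by decide)⟩, ?_⟩
  apply light_of_sq
  have hnn : (0:ℝ) ≤ q 0 ^ 2 + q 1 ^ 2 + q 2 ^ 2 := by positivity
  have h3 : q 3 - (if (3 : Fin 4) = 3 then q 3 - s else 0) = s := by rw [if_pos rfl]; ring
  have h0 : (if (0 : Fin 4) = 3 then q 3 - s else 0) = 0 := if_neg (by decide)
  have h1 : (if (1 : Fin 4) = 3 then q 3 - s else 0) = 0 := if_neg (by decide)
  have h2 : (if (2 : Fin 4) = 3 then q 3 - s else 0) = 0 := if_neg (by decide)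
  rw [h0, h1, h2, h3, hs, Real.sq_sqrt hnn]
  ring

theorem no_faster_than_light_observers
    (f : (Fin 4 → ℝ) → (Fin 4 → ℝ)) (hBij : Function.Bijective f)
    (hLight : ∀ x y, mdist x y = mtime x y ↔ mdist (f x) (f y) = mtime (f x) (f y))
    (u : Fin 4 → ℝ) (hu : u ≠ 0)
    (hmap : f '' (Set.range fun t : ℝ => t • u) = timeAxis) :
    u 0 ^ 2 + u 1 ^ 2 + u 2 ^ 2 < u 3 ^ 2 ∨
      (Set.range fun t : ℝ => t • u) = timeAxis := by
  rcases lt_trichotomy (u 0 ^ 2 + u 1 ^ 2 + u 2 ^ 2) (u 3 ^ 2) with h | h | h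
  · exact Or.inl h
  · -- lightlike case: contradiction
    exfalso
    have h0 : (0 : Fin 4 → ℝ) ∈ Set.range fun t : ℝ => t • u := ⟨0, by simp⟩
    have h1 : u ∈ Set.range fun t : ℝ => t • u := ⟨1, one_smul ℝ u⟩
    have hf0 : f 0 ∈ timeAxis := hmap ▸ Set.mem_image_of_mem f h0
    have hfu : f u ∈ timeAxis := hmap ▸ Set.mem_image_of_mem f h1
    have hlu : mdist u 0 = mtime u 0 := by
      apply light_of_sq
      simpa using h
    have hl' := (hLight u 0).mp hlu
    have hsq := sq_of_light hl'
    obtain ⟨a0, a1, a2⟩ := hfu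
    obtain ⟨b0, b1, b2⟩ := hf0
    have h3 : f u 3 = f 0 3 := by nlinarith [hsq]
    have hfeq : f u = f 0 := by
      funext i
      fin_cases i
      · show f u 0 = f 0 0; rw [a0, b0]
      · show f u 1 = f 0 1; rw [a1, b1]
      · show f u 2 = f 0 2; rw [a2, b2]
      · exact h3
    exact hu (hBij.1 hfeq)
  · -- spacelike case: contradiction
    exfalso
    have hST : (0:ℝ) ≤ u 0 ^ 2 + u 1 ^ 2 + u 2 ^ 2 - u 3 ^ 2 := by linarith
    -- choose p with p 3 = 0, spatial part nonzero and orthogonal to u's spatial part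
    obtain ⟨p, hkey⟩ : ∃ p : Fin 4 → ℝ, ∀ t : ℝ, ¬ mdist p (t • u) = mtime p (t • u) := by
      by_cases hc : u 0 = 0 ∧ u 1 = 0
      · obtain ⟨hc0, hc1⟩ := hc
        refine ⟨![1, 0, 0, 0], fun t hlt => ?_⟩
        have hsq := sq_of_light hlt
        simp only [Pi.smul_apply, smul_eq_mul] at hsq
        norm_num [hc0, hc1] at hsq
        rw [show (![1, 0, 0, 0] : Fin 4 → ℝ) 2 = 0 from rfl,
          show (![1, 0, 0, 0] : Fin 4 → ℝ) 3 = 0 from rfl] at hsq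
        rw [hc0, hc1] at hST
        norm_num at hST
        nlinarith [hsq, mul_nonneg (sq_nonneg t) (sub_nonneg.mpr hST)]
      · refine ⟨![-(u 1), u 0, 0, 0], fun t hlt => ?_⟩
        have hpne : 0 < u 0 ^ 2 + u 1 ^ 2 := by
          rcases not_and_or.mp hc with h' | h' <;>
            nlinarith [sq_nonneg (u 0), sq_nonneg (u 1), abs_pos.mpr h', sq_abs (u 0),
              sq_abs (u 1), mul_pos (abs_pos.mpr h') (abs_pos.mpr h')]
        have hsq := sq_of_light hlt
        simp only [Pi.smul_apply, smul_eq_mul] at hsq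
        norm_num at hsq
        rw [show (![-(u 1), u 0, 0, 0] : Fin 4 → ℝ) 2 = 0 from rfl,
          show (![-(u 1), u 0, 0, 0] : Fin 4 → ℝ) 3 = 0 from rfl] at hsq
        nlinarith [hsq, hpne, mul_nonneg (sq_nonneg t) hST]
    obtain ⟨w, hwT, hwl⟩ := exists_light_timeAxis (f p)
    rw [← hmap] at hwT
    obtain ⟨a, ⟨t, rfl⟩, hfa⟩ := hwT
    exact hkey t ((hLight p (t • u)).mpr (by rw [hfa]; exact hwl))
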